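/- Let δ : Ω̄ → (0,∞) satisfy the Hölder bound δ(y) ≤ δ(x) + M|x−y|^λ for all x,y ∈ Ω̄ with λ ∈ (0,1], and suppose for some x₀ and all 0 < r < r*, the integral ∫₀^{r*} r^{d−1} (δ(x₀) + M r^λ)^{−q} dr ≤ B. If λq > d, then δ(x₀)^q ≥ c or δ(x₀)^{q−d/λ} ≥ c for an explicit constant c depending on B, M, r*, d, q, λ; consequently δ(x₀) is bounded below by a positive constant depending only on these data. -/
import Mathlib


open MeasureTheory

private lemma rpow_lb {x a p : ℝ} (hx : 0 < x) (hp : 0 < p) (ha : 0 ≤ a)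
    (h : a ≤ x ^ p) : a ^ (1/p) ≤ x := by
  have h2 := Real.rpow_le_rpow ha h (by positivity : (0:ℝ) ≤ 1/p)
  rwa [← Real.rpow_mul hx.le, mul_one_div_cancel hp.ne', Real.rpow_one] at h2

/-- The core one-dimensional integral estimate in the Healey–Krömer lower bound:
if `∫₀^{r*} r^{d-1} (δ₀ + M r^λ)^{-q} dr ≤ B` and `λq > d`, then `δ₀^q` or
`δ₀^{q - d/λ}` is bounded below by an explicit constant depending only on
`B, M, r*, d, q, λ`; consequently `δ₀` itself is uniformly bounded below. -/
theorem stmt5 (d : ℕ) (hd : 1 ≤ d) (q lam M rstar B : ℝ)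
    (hq : 0 < q) (hlam : 0 < lam) (hlam1 : lam ≤ 1) (hM : 0 < M)
    (hr : 0 < rstar) (hB : 0 < B) (hlq : (d : ℝ) < lam * q) :
    ∃ c > 0, ∃ c' > 0, ∀ δ0 : ℝ, 0 < δ0 →
      (∫ r in Set.Ioo (0 : ℝ) rstar,
          r ^ ((d : ℝ) - 1) * (δ0 + M * r ^ lam) ^ (-q)) ≤ B →
      (c ≤ δ0 ^ q ∨ c ≤ δ0 ^ (q - (d : ℝ) / lam)) ∧ c' ≤ δ0 := by
  have hd1 : (1:ℝ) ≤ (d:ℝ) := by exact_mod_cast hd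
  have hd0 : (0:ℝ) < (d:ℝ) := by linarith
  have hdl : (d:ℝ)/lam < q := by rw [div_lt_iff₀ hlam]; linarith [hlq]
  have he : 0 < q - (d:ℝ)/lam := sub_pos.mpr hdl
  set K : ℝ := (d:ℝ) * 2 ^ q * B with hK
  have hKp : 0 < K := by positivity
  set c1 : ℝ := rstar ^ (d:ℝ) / K with hc1
  set c2 : ℝ := M ^ (-(d:ℝ)/lam) / K with hc2
  have hc1p : 0 < c1 := by positivity
  have hc2p : 0 < c2 := by positivity
  refine ⟨min c1 c2, lt_min hc1p hc2p,
    min (c1 ^ (1/q)) (c2 ^ (1/(q - (d:ℝ)/lam))), lt_min (by positivity) (by positivity), ?_⟩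
  intro δ0 hδ0 hint
  set f : ℝ → ℝ := fun r => r ^ ((d : ℝ) - 1) * (δ0 + M * r ^ lam) ^ (-q) with hf
  set A : ℝ := (δ0 / M) ^ (1/lam) with hA
  have hAp : 0 < A := by positivity
  set R : ℝ := min rstar A with hR
  have hRp : 0 < R := lt_min hr hAp
  have hRr : R ≤ rstar := min_le_left _ _
  -- continuity / integrability
  have hcpow : ∀ s : Set ℝ, ContinuousOn (fun r : ℝ => r ^ ((d:ℝ) - 1)) s := by
    intro s x hx
    exact (Real.continuousAt_rpow_const x _ (Or.inr (by linarith))).continuousWithinAt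
  have hbase : ContinuousOn (fun r : ℝ => δ0 + M * r ^ lam) (Set.Icc 0 rstar) := by
    refine continuousOn_const.add (continuousOn_const.mul ?_)
    intro x hx
    exact (Real.continuousAt_rpow_const x lam (Or.inr hlam.le)).continuousWithinAt
  have hfc : ContinuousOn f (Set.Icc 0 rstar) := by
    refine (hcpow _).mul (hbase.rpow_const fun x hx => Or.inl ?_)
    have : 0 ≤ x := hx.1
    positivity
  have hfInt : IntegrableOn f (Set.Ioo 0 rstar) :=
    (hfc.integrableOn_Icc).mono_set Set.Ioo_subset_Icc_self
  have hsub : Set.Ioo (0:ℝ) R ⊆ Set.Ioo 0 rstar := Set.Ioo_subset_Ioo le_rfl hRr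
  set g : ℝ → ℝ := fun r => (2*δ0) ^ (-q) * r ^ ((d:ℝ) - 1) with hg
  have hgInt : IntegrableOn g (Set.Ioo 0 R) := by
    have : ContinuousOn g (Set.Icc 0 R) := continuousOn_const.mul (hcpow _)
    exact this.integrableOn_Icc.mono_set Set.Ioo_subset_Icc_self
  -- pointwise bound on Ioo 0 R
  have hbd : ∀ r ∈ Set.Ioo (0:ℝ) R, g r ≤ f r := by
    intro r hr'
    obtain ⟨h0r, hrR⟩ := hr'
    have h1 : r ^ lam ≤ δ0 / M := by
      have hrA : r ≤ A := le_trans hrR.le (min_le_right _ _)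
      calc r ^ lam ≤ A ^ lam := Real.rpow_le_rpow h0r.le hrA hlam.le
        _ = δ0 / M := by
          rw [hA, ← Real.rpow_mul (by positivity), one_div,
            inv_mul_cancel₀ hlam.ne', Real.rpow_one]
    have h2 : δ0 + M * r ^ lam ≤ 2 * δ0 := by
      have : M * r ^ lam ≤ δ0 := by
        rw [mul_comm]; exact (le_div_iff₀ hM).mp h1
      linarith
    have h3 : (2*δ0)^(-q) ≤ (δ0 + M * r^lam)^(-q) :=
      Real.rpow_le_rpow_of_nonpos (by positivity) h2 (neg_nonpos.mpr hq.le)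
    simp only [hf, hg]
    rw [mul_comm]
    exact mul_le_mul_of_nonneg_left h3 (Real.rpow_nonneg h0r.le _)
  -- lower bound the integral
  have step1 : ∫ r in Set.Ioo (0:ℝ) R, g r ≤ ∫ r in Set.Ioo (0:ℝ) R, f r :=
    setIntegral_mono_on hgInt (hfInt.mono_set hsub) measurableSet_Ioo hbd
  have step2 : ∫ r in Set.Ioo (0:ℝ) R, f r ≤ ∫ r in Set.Ioo (0:ℝ) rstar, f r := by
    refine setIntegral_mono_set hfInt ?_ (HasSubset.Subset.eventuallyLE hsub)
    refine (ae_restrict_iff' measurableSet_Ioo).mpr (Filter.Eventually.of_forall ?_)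
    intro x hx
    have h0x : 0 < x := hx.1
    simp only [hf]
    positivity
  have hcomp : ∫ r in Set.Ioo (0:ℝ) R, g r = (2*δ0)^(-q) * (R ^ (d:ℝ) / (d:ℝ)) := by
    simp only [hg]
    rw [integral_const_mul]
    congr 1
    rw [← integral_Ioc_eq_integral_Ioo, ← intervalIntegral.integral_of_le hRp.le,
      integral_rpow (Or.inl (by linarith : (-1:ℝ) < (d:ℝ) - 1))]
    rw [Real.zero_rpow (by linarith : (d:ℝ) - 1 + 1 ≠ 0)]
    rw [sub_add_cancel]
    ring
  have key : (2*δ0)^(-q) * (R ^ (d:ℝ) / (d:ℝ)) ≤ B := by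
    rw [← hcomp]; exact le_trans (le_trans step1 step2) hint
  -- rearrange: R^d ≤ K * δ0^q
  have h2d : (2*δ0)^(-q) = (2^q * δ0^q)⁻¹ := by
    rw [Real.rpow_neg (by positivity), Real.mul_rpow (by norm_num) hδ0.le]
  have key' : R ^ (d:ℝ) ≤ K * δ0 ^ q := by
    rw [h2d, inv_mul_eq_div, div_div, div_le_iff₀ (by positivity)] at key
    calc R ^ (d:ℝ) ≤ B * ((d:ℝ) * (2^q * δ0^q)) := key
      _ = K * δ0 ^ q := by rw [hK]; ring
  rcases le_total rstar A with hca | hca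
  · -- R = rstar : first alternative
    have hRe : R = rstar := min_eq_left hca
    have hq1 : c1 ≤ δ0 ^ q := by
      rw [hc1, div_le_iff₀ hKp]
      rw [hRe] at key'
      linarith [key']
    refine ⟨Or.inl (le_trans (min_le_left _ _) hq1), ?_⟩
    exact le_trans (min_le_left _ _) (rpow_lb hδ0 hq hc1p.le hq1)
  · -- R = A : second alternative
    have hRe : R = A := min_eq_right hca
    have hAd : A ^ (d:ℝ) = δ0 ^ ((d:ℝ)/lam) * M ^ (-((d:ℝ)/lam)) := by
      rw [hA, ← Real.rpow_mul (by positivity), one_div, inv_mul_eq_div,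
        div_eq_mul_inv δ0 M, Real.mul_rpow hδ0.le (by positivity),
        Real.inv_rpow hM.le, ← Real.rpow_neg_one (M ^ ((d:ℝ)/lam)),
        ← Real.rpow_mul hM.le]
      ring_nf
    have hsplit : δ0 ^ q = δ0 ^ (q - (d:ℝ)/lam) * δ0 ^ ((d:ℝ)/lam) := by
      rw [← Real.rpow_add hδ0]; ring_nf
    have hapos : 0 < δ0 ^ ((d:ℝ)/lam) := by positivity
    have key2 : δ0 ^ ((d:ℝ)/lam) * M ^ (-((d:ℝ)/lam)) ≤
        K * (δ0 ^ (q - (d:ℝ)/lam) * δ0 ^ ((d:ℝ)/lam)) := by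
      rw [← hsplit, ← hAd, ← hRe]; exact key'
    have hm : M ^ (-((d:ℝ)/lam)) ≤ K * δ0 ^ (q - (d:ℝ)/lam) := by
      have h' : M ^ (-((d:ℝ)/lam)) * δ0 ^ ((d:ℝ)/lam) ≤
          (K * δ0 ^ (q - (d:ℝ)/lam)) * δ0 ^ ((d:ℝ)/lam) := by nlinarith [key2]
      exact le_of_mul_le_mul_right (by linarith [h']) hapos
    have hq2 : c2 ≤ δ0 ^ (q - (d:ℝ)/lam) := by
      rw [hc2, div_le_iff₀ hKp, neg_div]
      linarith [hm]
    refine ⟨Or.inr (le_trans (min_le_right _ _) hq2), ?_⟩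
    exact le_trans (min_le_right _ _) (rpow_lb hδ0 he hc2p.le hq2)
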